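/- Let $\Delta^n \subset \mathbb{R}^{n+1}$ be the standard $n$-simplex and let $X_1, \ldots, X_{n+1}$ be closed subsets covering $\Delta^n$ such that for each $i$, the set $X_i$ is disjoint from the $i$-th facet $\{x \in \Delta^n : x_i = 0\}$. Then $\bigcap_{i=1}^{n+1} X_i \neq \emptyset$. -/

import Mathlib

open Finset
namespace KKMProof
open scoped Classical

abbrev V : Type := ℕ → ℤ

def stepv (i : ℕ) : V := fun x => if x = i + 1 then 1 else if x = i then -1 else 0

def IsVtx (d k : ℕ) (v : V) : Prop :=
  (∀ i, 0 ≤ v i) ∧ (∀ i, d < i → v i = 0) ∧ (∑ i ∈ range (d + 1), v i = (k : ℤ))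

def IsCell (d k : ℕ) (f : ℕ → V) : Prop :=
  (∀ j, IsVtx d k (f j)) ∧ (∀ j, d ≤ j → f j = f d) ∧
  ∃ σ : ℕ → ℕ, Set.InjOn σ (Set.Iio d) ∧ (∀ j < d, σ j < d) ∧
    ∀ j < d, f (j + 1) = f j + stepv (σ j)

lemma IsVtx.le_k {d k : ℕ} {v : V} (h : IsVtx d k v) (i : ℕ) : v i ≤ (k : ℤ) := by
  obtain ⟨h1, h2, h3⟩ := h
  rcases le_or_gt i d with hi | hi
  · calc v i ≤ ∑ j ∈ range (d + 1), v j := by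
          apply Finset.single_le_sum (fun j _ => h1 j)
          simp; omega
      _ = k := h3
  · rw [h2 i hi]; positivity

lemma cells_finite (d k : ℕ) : {f : ℕ → V | IsCell d k f}.Finite := by
  have hbig : (Set.univ.pi fun _ : Fin (d+1) =>
      Set.univ.pi fun _ : Fin (d+1) => Set.Icc (0:ℤ) k).Finite :=
    Set.Finite.pi fun _ => Set.Finite.pi fun _ => Set.finite_Icc _ _
  apply Set.Finite.of_finite_image
    (f := fun f (j i : Fin (d+1)) => f j i)
  · apply hbig.subset
    rintro _ ⟨f, hf, rfl⟩
    intro j _ i _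
    exact ⟨(hf.1 j).1 i, (hf.1 j).le_k i⟩
  · intro f hf g hg h
    have hfn : ∀ (f : ℕ → V), IsCell d k f → ∀ j i,
        f j i = if i ≤ d then f (min j d) i else 0 := by
      intro f hf j i
      have h1 : f j = f (min j d) := by
        rcases le_or_gt d j with hj | hj
        · rw [hf.2.1 j hj, min_eq_right hj]
        · rw [min_eq_left hj.le]
      rcases le_or_gt i d with hi | hi
      · rw [if_pos hi, h1]
      · rw [if_neg (by omega), (hf.1 _).2.1 i hi]
    funext j i
    rw [hfn f hf j i, hfn g hg j i]
    rcases le_or_gt i d with hi | hi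
    · rw [if_pos hi, if_pos hi]
      exact congrFun (congrFun h ⟨min j d, by omega⟩) ⟨i, by omega⟩
    · rw [if_neg (by omega), if_neg (by omega)]

noncomputable def cells (d k : ℕ) : Finset (ℕ → V) := (cells_finite d k).toFinset

lemma mem_cells {d k : ℕ} {f : ℕ → V} : f ∈ cells d k ↔ IsCell d k f :=
  (cells_finite d k).mem_toFinset

variable (c : V → ℕ)

def IsRainbow (d : ℕ) (f : ℕ → V) : Prop :=
  (range (d + 1)).image (fun j => c (f j)) = range (d + 1)

noncomputable def rainbowCells (d k : ℕ) : Finset (ℕ → V) :=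
  (cells d k).filter (fun f => IsRainbow c d f)

/-- The base case `d = 0`. -/
lemma base_case (k : ℕ) (hc : ∀ v, IsVtx 0 k v → c v ≤ 0) :
    rainbowCells c 0 k = {fun _ i => if i = 0 then (k : ℤ) else 0} := by
  set v0 : V := fun i => if i = 0 then (k:ℤ) else 0 with hv0
  have hvtx : IsVtx 0 k v0 := by
    refine ⟨fun i => by by_cases h : i = 0 <;> simp [hv0, h], fun i hi => by simp [hv0]; omega, by simp [hv0]⟩
  ext f
  simp only [rainbowCells, mem_filter, mem_cells, Finset.mem_singleton]
  constructor
  · rintro ⟨⟨h1, h2, _⟩, _⟩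
    funext j i
    have hv := h1 j
    have : f j = f 0 := by rw [h2 j (by omega), h2 0 (by omega)]
    rw [this]
    by_cases hi : i = 0
    · subst hi
      have := (h1 0).2.2
      simpa [hv0] using this
    · show f 0 i = if i = 0 then (k:ℤ) else 0
      rw [if_neg hi]
      exact (h1 0).2.1 i (by omega)
  · rintro rfl
    refine ⟨⟨fun _ => hvtx, fun _ _ => rfl, id, fun x hx => absurd hx (by simp), by omega, by omega⟩, ?_⟩
    have h0 : c v0 = 0 := Nat.le_zero.mp (hc v0 hvtx)
    unfold IsRainbow
    ext a
    simp [h0, eq_comm]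

/-- Per-cell door counting: the number of doors of a cell is odd iff it is
rainbow (for colorings into `{0,…,d}`). -/
lemma doorcount (d : ℕ) (col : ℕ → ℕ) (hcol : ∀ j, j ∈ range (d+1) → col j ≤ d) :
    (((range (d+1)).filter
        (fun j => ((range (d+1)).erase j).image col = range d)).card : ZMod 2)
    = if (range (d+1)).image col = range (d+1) then 1 else 0 := by
  set s := range (d+1) with hs
  set D := s.filter (fun j => (s.erase j).image col = range d) with hD
  by_cases hrb : s.image col = s
  · have hinj : Set.InjOn col ↑s := Finset.injOn_of_card_image_eq (by rw [hrb])
    have hd_mem : d ∈ s.image col := by rw [hrb, hs]; simp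
    obtain ⟨j0, hj0s, hj0⟩ := Finset.mem_image.mp hd_mem
    have hDeq : D = {j0} := by
      ext j
      simp only [hD, mem_filter, Finset.mem_singleton]
      constructor
      · rintro ⟨hjs, hj⟩
        by_contra hne
        have hj0e : j0 ∈ s.erase j := Finset.mem_erase.mpr ⟨fun h => hne (h ▸ rfl), hj0s⟩
        have : (d : ℕ) ∈ range d := by
          rw [← hj]
          exact hj0 ▸ Finset.mem_image_of_mem col hj0e
        simp at this
      · rintro rfl
        refine ⟨hj0s, ?_⟩
        ext a
        simp only [Finset.mem_image, Finset.mem_erase, Finset.mem_range]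
        constructor
        · rintro ⟨l, ⟨hlne, hls⟩, rfl⟩
          have h1 : col l ≤ d := hcol l hls
          have h2 : col l ≠ d := by
            intro h
            exact hlne (hinj hls hj0s (h.trans hj0.symm))
          omega
        · intro ha
          have : a ∈ s.image col := by rw [hrb, hs]; simp; omega
          obtain ⟨l, hls, hcl⟩ := Finset.mem_image.mp this
          refine ⟨l, ⟨?_, hls⟩, hcl⟩
          rintro rfl
          omega
    rw [hDeq, if_pos hrb]
    simp
  · rw [if_neg hrb]
    by_cases hDe : D = ∅
    · rw [hDe]; simp
    · obtain ⟨j0, hj0D⟩ := Finset.nonempty_of_ne_empty hDe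
      obtain ⟨hj0s, hdoor0⟩ := Finset.mem_filter.mp hj0D
      have hcard_e : (s.erase j0).card = d := by
        rw [Finset.card_erase_of_mem hj0s, hs, Finset.card_range]; omega
      have hinj0 : Set.InjOn col ↑(s.erase j0) :=
        Finset.injOn_of_card_image_eq (by rw [hdoor0, Finset.card_range, hcard_e])
      have hcolj0top : col j0 ≠ d := by
        intro h
        apply hrb
        conv_lhs => rw [← Finset.insert_erase hj0s, Finset.image_insert, hdoor0, h]
        rw [hs, Finset.range_add_one]
      have hcolj0 : col j0 ∈ range d := by
        have := hcol j0 hj0s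
        rw [Finset.mem_range]; omega
      have hpart : col j0 ∈ (s.erase j0).image col := hdoor0 ▸ hcolj0
      obtain ⟨j1, hj1e, hj1⟩ := Finset.mem_image.mp hpart
      have hne : j1 ≠ j0 := (Finset.mem_erase.mp hj1e).1
      have hj1s : j1 ∈ s := (Finset.mem_erase.mp hj1e).2
      have hdoor1 : (s.erase j1).image col = range d := by
        have hsplit : s.erase j1 = insert j0 ((s.erase j0).erase j1) := by
          ext x
          simp only [Finset.mem_erase, Finset.mem_insert]
          constructor
          · rintro ⟨hx1, hx2⟩
            by_cases hx0 : x = j0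
            · exact Or.inl hx0
            · exact Or.inr ⟨hx1, hx0, hx2⟩
          · rintro (rfl | ⟨h1, h2, h3⟩)
            · exact ⟨Ne.symm hne, hj0s⟩
            · exact ⟨h1, h3⟩
        rw [hsplit, Finset.image_insert]
        have himg : ((s.erase j0).erase j1).image col = (range d).erase (col j1) := by
          apply Finset.eq_of_subset_of_card_le
          · intro x hx
            obtain ⟨l, hl, rfl⟩ := Finset.mem_image.mp hx
            obtain ⟨hlne, hle⟩ := Finset.mem_erase.mp hl
            refine Finset.mem_erase.mpr ⟨?_, hdoor0 ▸ Finset.mem_image_of_mem col hle⟩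
            intro h
            exact hlne (hinj0 hle hj1e h)
          · have h1 : ((range d).erase (col j1)).card = d - 1 := by
              rw [Finset.card_erase_of_mem (hj1 ▸ hcolj0), Finset.card_range]
            have h2 : (((s.erase j0).erase j1).image col).card = d - 1 := by
              rw [Finset.card_image_of_injOn (hinj0.mono (by
                intro x hx
                exact Finset.mem_coe.mpr (Finset.mem_of_mem_erase (Finset.mem_coe.mp hx)))),
                Finset.card_erase_of_mem hj1e, hcard_e]
            omega
        rw [himg, hj1, Finset.insert_erase hcolj0]
      have hDeq : D = {j0, j1} := by
        ext j
        simp only [hD, mem_filter, Finset.mem_insert, Finset.mem_singleton]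
        constructor
        · rintro ⟨hjs, hdj⟩
          by_contra hcon
          push_neg at hcon
          obtain ⟨hne0, hne1⟩ := hcon
          have hcard_j : (s.erase j).card = d := by
            rw [Finset.card_erase_of_mem hjs, hs, Finset.card_range]; omega
          have hinjj : Set.InjOn col ↑(s.erase j) :=
            Finset.injOn_of_card_image_eq (by rw [hdj, Finset.card_range, hcard_j])
          have h0m : j0 ∈ s.erase j := Finset.mem_erase.mpr ⟨fun h => hne0 (h ▸ rfl), hj0s⟩
          have h1m : j1 ∈ s.erase j := Finset.mem_erase.mpr ⟨fun h => hne1 (h ▸ rfl), hj1s⟩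
          exact hne (hinjj h1m h0m hj1)
        · rintro (h | h)
          · exact h ▸ ⟨hj0s, hdoor0⟩
          · exact h ▸ ⟨hj1s, hdoor1⟩
      rw [hDeq]
      rw [Finset.card_pair (Ne.symm hne)]
      decide

/-! ### Step vector utilities -/

lemma stepv_self (i : ℕ) : stepv i i = -1 := by
  simp only [stepv]; rw [if_neg (by omega)]; simp

lemma stepv_succ_self (i : ℕ) : stepv i (i+1) = 1 := by
  simp only [stepv]; simp

lemma stepv_other (i x : ℕ) (h1 : x ≠ i) (h2 : x ≠ i + 1) : stepv i x = 0 := by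
  simp only [stepv]; rw [if_neg h2, if_neg h1]

lemma stepv_sum_mul (g : ℕ → ℤ) (i N : ℕ) (h : i + 2 ≤ N) :
    ∑ x ∈ range N, g x * stepv i x = g (i+1) - g i := by
  have hsub : ({i, i+1} : Finset ℕ) ⊆ range N := by
    intro x hx
    simp only [Finset.mem_insert, Finset.mem_singleton] at hx
    rcases hx with rfl | rfl <;> (rw [Finset.mem_range]; omega)
  rw [← Finset.sum_subset hsub]
  · rw [Finset.sum_pair (by omega : i ≠ i + 1), stepv_self, stepv_succ_self]
    ring
  · intro x _ hx
    simp only [Finset.mem_insert, Finset.mem_singleton] at hx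
    push_neg at hx
    rw [stepv_other i x hx.1 hx.2, mul_zero]

lemma stepv_sum_eq {a b a' b' : ℕ} (h : stepv a + stepv b = stepv a' + stepv b') (g : ℕ → ℤ) :
    g (a+1) - g a + (g (b+1) - g b) = g (a'+1) - g a' + (g (b'+1) - g b') := by
  set N := max (max a b) (max a' b') + 2 with hN
  have h1 := stepv_sum_mul g a N (by omega)
  have h2 := stepv_sum_mul g b N (by omega)
  have h3 := stepv_sum_mul g a' N (by omega)
  have h4 := stepv_sum_mul g b' N (by omega)
  have key : ∑ x ∈ range N, g x * (stepv a + stepv b) x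
      = ∑ x ∈ range N, g x * (stepv a' + stepv b') x := by rw [h]
  simp only [Pi.add_apply, mul_add, Finset.sum_add_distrib] at key
  rw [h1, h2, h3, h4] at key
  linarith

lemma stepv_sum_eq1 {a b e : ℕ} (h : stepv a + stepv b = stepv e) (g : ℕ → ℤ) :
    g (a+1) - g a + (g (b+1) - g b) = g (e+1) - g e := by
  set N := max (max a b) e + 2 with hN
  have h1 := stepv_sum_mul g a N (by omega)
  have h2 := stepv_sum_mul g b N (by omega)
  have h3 := stepv_sum_mul g e N (by omega)
  have key : ∑ x ∈ range N, g x * (stepv a + stepv b) x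
      = ∑ x ∈ range N, g x * (stepv e) x := by rw [h]
  simp only [Pi.add_apply, mul_add, Finset.sum_add_distrib] at key
  rw [h1, h2, h3] at key
  linarith

/-- A sum of two steps is never a single step. -/
lemma stepv_double_ne_single (a b e : ℕ) :
    stepv a + stepv b ≠ stepv e := by
  intro h
  have := stepv_sum_eq1 h (fun x => (x : ℤ))
  push_cast at this
  omega

lemma stepv_inj {a b : ℕ} (h : stepv a = stepv b) : a = b := by
  have h1 := congrFun h a
  rw [stepv_self] at h1
  simp only [stepv] at h1
  split_ifs at h1 <;> omega

/-- If two unordered pairs of steps have the same sum, the pairs coincide. -/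
lemma stepv_pair_eq {a b a' b' : ℕ}
    (h : stepv a + stepv b = stepv a' + stepv b') : a' = a ∨ a' = b := by
  have e1 := stepv_sum_eq h (fun x => (x : ℤ)^2)
  have e2 := stepv_sum_eq h (fun x => (x : ℤ)^3)
  push_cast at e1 e2
  have hsum : (a : ℤ) + b = a' + b' := by nlinarith [e1]
  have hsq : (a : ℤ)^2 + b^2 = a'^2 + b'^2 := by nlinarith [e2, hsum]
  have hzero : ((a' : ℤ) - a) * ((a' : ℤ) - b) = 0 := by nlinarith [hsum, hsq]
  rcases mul_eq_zero.mp hzero with h' | h'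
  · left; omega
  · right; omega

/-! ### Chains -/

def ChainOK (d : ℕ) (f : ℕ → V) (σ : ℕ → ℕ) : Prop :=
  ∀ p < d, f (p + 1) = f p + stepv (σ p)

lemma chain_coord {d : ℕ} {f : ℕ → V} {σ : ℕ → ℕ} (h : ChainOK d f σ) (m : ℕ)
    {l1 l2 : ℕ} (h12 : l1 ≤ l2) (hl2 : l2 ≤ d) :
    f l2 m = f l1 m + ((Finset.Ico l1 l2).filter (fun p => σ p + 1 = m)).card
      - ((Finset.Ico l1 l2).filter (fun p => σ p = m)).card := by
  induction l2, h12 using Nat.le_induction with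
  | base => simp
  | succ l2 h12 ih =>
    have hl2' : l2 ≤ d := by omega
    have hstep := h l2 (by omega)
    have hico : Finset.Ico l1 (l2+1) = insert l2 (Finset.Ico l1 l2) := by
      ext x
      simp only [Finset.mem_Ico, Finset.mem_insert]
      omega
    have hnotmem : l2 ∉ Finset.Ico l1 l2 := by simp
    have hval : f (l2+1) m = f l2 m + stepv (σ l2) m := by rw [hstep]; simp
    have hA : ((insert l2 (Finset.Ico l1 l2)).filter (fun p => σ p + 1 = m)).card
        = ((Finset.Ico l1 l2).filter (fun p => σ p + 1 = m)).card
          + (if σ l2 + 1 = m then 1 else 0) := by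
      rw [Finset.filter_insert]
      split_ifs
      · rw [Finset.card_insert_of_notMem
          (fun hx => hnotmem (Finset.mem_of_mem_filter _ hx))]
      · omega
    have hB : ((insert l2 (Finset.Ico l1 l2)).filter (fun p => σ p = m)).card
        = ((Finset.Ico l1 l2).filter (fun p => σ p = m)).card
          + (if σ l2 = m then 1 else 0) := by
      rw [Finset.filter_insert]
      split_ifs
      · rw [Finset.card_insert_of_notMem
          (fun hx => hnotmem (Finset.mem_of_mem_filter _ hx))]
      · omega
    rw [hico, hA, hB, hval, ih hl2']
    simp only [stepv]
    split_ifs <;> push_cast <;> omega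

lemma filter_sigma_card_le_one {d : ℕ} {σ : ℕ → ℕ} (hinj : Set.InjOn σ (Set.Iio d))
    {l1 l2 : ℕ} (hl2 : l2 ≤ d) (v : ℕ) :
    ((Finset.Ico l1 l2).filter (fun p => σ p = v)).card ≤ 1 := by
  refine Finset.card_le_one.mpr ?_
  intro a ha b hb
  obtain ⟨ha1, ha2⟩ := Finset.mem_filter.mp ha
  obtain ⟨hb1, hb2⟩ := Finset.mem_filter.mp hb
  rw [Finset.mem_Ico] at ha1 hb1
  exact hinj (by simp only [Set.mem_Iio]; omega) (by simp only [Set.mem_Iio]; omega)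
    (ha2.trans hb2.symm)

lemma filter_sigma_card_le_one' {d : ℕ} {σ : ℕ → ℕ} (hinj : Set.InjOn σ (Set.Iio d))
    {l1 l2 : ℕ} (hl2 : l2 ≤ d) (v : ℕ) :
    ((Finset.Ico l1 l2).filter (fun p => σ p + 1 = v)).card ≤ 1 := by
  refine Finset.card_le_one.mpr ?_
  intro a ha b hb
  obtain ⟨ha1, ha2⟩ := Finset.mem_filter.mp ha
  obtain ⟨hb1, hb2⟩ := Finset.mem_filter.mp hb
  rw [Finset.mem_Ico] at ha1 hb1
  exact hinj (by simp only [Set.mem_Iio]; omega) (by simp only [Set.mem_Iio]; omega)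
    (by omega)

/-- Pigeonhole: an injection of `Iio d` into itself is surjective. -/
lemma sigma_surj {d : ℕ} {σ : ℕ → ℕ} (hinj : Set.InjOn σ (Set.Iio d))
    (hmaps : ∀ p < d, σ p < d) (v : ℕ) (hv : v < d) : ∃ p < d, σ p = v := by
  have himg : (range d).image σ = range d := by
    apply Finset.eq_of_subset_of_card_le
    · intro x hx
      obtain ⟨p, hp, rfl⟩ := Finset.mem_image.mp hx
      rw [Finset.mem_range] at hp ⊢
      exact hmaps p hp
    · rw [Finset.card_image_of_injOn (fun a ha b hb hab =>
        hinj (by simpa using ha) (by simpa using hb) hab), Finset.card_range]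
  have : v ∈ (range d).image σ := by rw [himg]; simpa using hv
  obtain ⟨p, hp, hpv⟩ := Finset.mem_image.mp this
  exact ⟨p, by simpa using hp, hpv⟩

/-- An injection of `Iio d` into itself agreeing with another one off a point
agrees there too. -/
lemma sigma_determined {d : ℕ} {σ1 σ2 : ℕ → ℕ}
    (hinj1 : Set.InjOn σ1 (Set.Iio d)) (hmaps1 : ∀ p < d, σ1 p < d)
    (hinj2 : Set.InjOn σ2 (Set.Iio d)) (hmaps2 : ∀ p < d, σ2 p < d)
    (q : ℕ) (hq : q < d) (hagree : ∀ p < d, p ≠ q → σ1 p = σ2 p) :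
    σ1 q = σ2 q := by
  by_contra hne
  obtain ⟨p, hp, hpv⟩ := sigma_surj hinj1 hmaps1 (σ2 q) (hmaps2 q hq)
  have hpq : p ≠ q := fun h => hne (h ▸ hpv)
  have : σ2 p = σ2 q := by rw [← hagree p hp hpq, hpv]
  exact hpq (hinj2 (Set.mem_Iio.mpr hp) (Set.mem_Iio.mpr hq) this)

/-! ### Facets -/

/-- The facet of the chain `f` obtained by dropping the `j`-th vertex,
normalized to be constant from index `d-1` on. -/
def fct (d : ℕ) (f : ℕ → V) (j : ℕ) : ℕ → V :=
  fun l => if min l (d - 1) < j then f (min l (d - 1)) else f (min l (d - 1) + 1)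

lemma fct_lt {d : ℕ} (f : ℕ → V) (j l : ℕ) (hl : l ≤ d - 1) (hlj : l < j) :
    fct d f j l = f l := by
  unfold fct; rw [min_eq_left hl, if_pos hlj]

lemma fct_ge {d : ℕ} (f : ℕ → V) (j l : ℕ) (hl : l ≤ d - 1) (hlj : j ≤ l) :
    fct d f j l = f (l + 1) := by
  unfold fct; rw [min_eq_left hl, if_neg (by omega)]

lemma fct_congr {d : ℕ} {g f : ℕ → V} {j : ℕ} (h : ∀ l, l ≠ j → g l = f l) :
    fct d g j = fct d f j := by
  funext l
  unfold fct
  split_ifs with h1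
  · rw [h _ (by omega)]
  · rw [h _ (by omega)]

/-! ### Vertex moves -/

lemma stepv_sum_range {i d : ℕ} (hi : i < d) :
    ∑ x ∈ range (d + 1), stepv i x = 0 := by
  have := stepv_sum_mul (fun _ => (1:ℤ)) i (d+1) (by omega)
  simpa using this

lemma IsVtx.add_step {d k : ℕ} {v : V} (h : IsVtx d k v) {i : ℕ} (hi : i < d)
    (hnn : 1 ≤ v i) : IsVtx d k (v + stepv i) := by
  obtain ⟨h1, h2, h3⟩ := h
  refine ⟨?_, ?_, ?_⟩
  · intro x
    simp only [Pi.add_apply]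
    by_cases hxi : x = i
    · rw [hxi, stepv_self]; omega
    · by_cases hxi1 : x = i + 1
      · rw [hxi1, stepv_succ_self]; have := h1 (i+1); omega
      · rw [stepv_other i x hxi hxi1]; have := h1 x; omega
  · intro x hx
    simp only [Pi.add_apply]
    rw [h2 x hx, stepv_other i x (by omega) (by omega)]; ring
  · simp only [Pi.add_apply, Finset.sum_add_distrib, h3, stepv_sum_range hi, add_zero]

lemma IsVtx.sub_step {d k : ℕ} {v : V} (h : IsVtx d k v) {i : ℕ} (hi : i < d)
    (hnn : 1 ≤ v (i + 1)) : IsVtx d k (v - stepv i) := by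
  obtain ⟨h1, h2, h3⟩ := h
  refine ⟨?_, ?_, ?_⟩
  · intro x
    simp only [Pi.sub_apply]
    by_cases hxi : x = i
    · rw [hxi, stepv_self]; have := h1 i; omega
    · by_cases hxi1 : x = i + 1
      · rw [hxi1, stepv_succ_self]; omega
      · rw [stepv_other i x hxi hxi1]; have := h1 x; omega
  · intro x hx
    simp only [Pi.sub_apply]
    rw [h2 x hx, stepv_other i x (by omega) (by omega)]; ring
  · simp only [Pi.sub_apply, Finset.sum_sub_distrib, h3, stepv_sum_range hi, sub_zero]

/-! ### Partner cells -/

def midP (f : ℕ → V) (σ : ℕ → ℕ) (j : ℕ) : ℕ → V :=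
  fun l => if l = j then f (j - 1) + stepv (σ j) else f l

def appP (d : ℕ) (f : ℕ → V) (σ : ℕ → ℕ) : ℕ → V :=
  fun l => if l < d then f (l + 1) else f d + stepv (σ 0)

def preP (d : ℕ) (f : ℕ → V) (σ : ℕ → ℕ) : ℕ → V :=
  fun l => if l = 0 then f 0 - stepv (σ (d - 1)) else f (min (l - 1) (d - 1))

lemma midP_isCell {d k : ℕ} {f : ℕ → V} {σ : ℕ → ℕ} {j : ℕ}
    (hvtx : ∀ l, IsVtx d k (f l)) (hnorm : ∀ l, d ≤ l → f l = f d)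
    (hinj : Set.InjOn σ (Set.Iio d)) (hmaps : ∀ p < d, σ p < d)
    (hchain : ChainOK d f σ) (h0 : 0 < j) (hjd : j < d)
    (hcoord : 1 ≤ f (j - 1) (σ j)) : IsCell d k (midP f σ j) := by
  refine ⟨?_, ?_, fun p => σ (if p = j - 1 then j else if p = j then j - 1 else p), ?_, ?_, ?_⟩
  · intro l
    unfold midP
    split_ifs with h
    · exact (hvtx (j-1)).add_step (hmaps j hjd) hcoord
    · exact hvtx l
  · intro l hl
    unfold midP
    rw [if_neg (by omega), if_neg (by omega)]
    exact hnorm l hl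
  · intro a ha b hb heq
    simp only [Set.mem_Iio] at ha hb
    have hta : (if a = j - 1 then j else if a = j then j - 1 else a) < d := by
      split_ifs <;> omega
    have htb : (if b = j - 1 then j else if b = j then j - 1 else b) < d := by
      split_ifs <;> omega
    have := hinj (Set.mem_Iio.mpr hta) (Set.mem_Iio.mpr htb) heq
    split_ifs at this <;> omega
  · intro p hp
    dsimp only
    split_ifs <;> [exact hmaps j hjd; exact hmaps (j-1) (by omega); exact hmaps p hp]
  · intro p hp
    dsimp only
    unfold midP
    by_cases hp1 : p = j - 1
    · rw [if_pos (by omega : p + 1 = j), if_neg (by omega : ¬ p = j), if_pos hp1, hp1]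
    · by_cases hp2 : p = j
      · rw [if_neg (by omega : ¬ p + 1 = j), if_pos hp2, if_neg hp1, if_pos hp2]
        have e1 := hchain p hp
        have e2 := hchain (j-1) (by omega)
        rw [show j - 1 + 1 = j by omega] at e2
        rw [e1, hp2, e2]
        abel
      · rw [if_neg (by omega : ¬ p + 1 = j), if_neg hp2, if_neg hp1, if_neg hp2]
        exact hchain p hp

lemma appP_isCell {d k : ℕ} {f : ℕ → V} {σ : ℕ → ℕ} (hd : 1 ≤ d)
    (hvtx : ∀ l, IsVtx d k (f l)) (hnorm : ∀ l, d ≤ l → f l = f d)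
    (hinj : Set.InjOn σ (Set.Iio d)) (hmaps : ∀ p < d, σ p < d)
    (hchain : ChainOK d f σ)
    (hcoord : 1 ≤ f d (σ 0)) : IsCell d k (appP d f σ) := by
  refine ⟨?_, ?_, fun p => σ (if p = d - 1 then 0 else p + 1), ?_, ?_, ?_⟩
  · intro l
    unfold appP
    split_ifs with h
    · exact hvtx _
    · exact (hvtx d).add_step (hmaps 0 hd) hcoord
  · intro l hl
    unfold appP
    rw [if_neg (by omega), if_neg (by omega)]
  · intro a ha b hb heq
    simp only [Set.mem_Iio] at ha hb
    have hta : (if a = d - 1 then 0 else a + 1) < d := by split_ifs <;> omega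
    have htb : (if b = d - 1 then 0 else b + 1) < d := by split_ifs <;> omega
    have := hinj (Set.mem_Iio.mpr hta) (Set.mem_Iio.mpr htb) heq
    split_ifs at this <;> omega
  · intro p hp
    dsimp only
    split_ifs <;> [exact hmaps 0 hd; exact hmaps (p+1) (by omega)]
  · intro p hp
    dsimp only
    unfold appP
    rcases eq_or_ne p (d-1) with rfl | hp1
    · rw [if_neg (by omega), if_pos (by omega), if_pos rfl]
      rw [show d - 1 + 1 = d by omega]
    · rw [if_pos (by omega), if_pos (by omega), if_neg hp1]
      exact hchain (p+1) (by omega)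

lemma preP_isCell {d k : ℕ} {f : ℕ → V} {σ : ℕ → ℕ} (hd : 1 ≤ d)
    (hvtx : ∀ l, IsVtx d k (f l)) (hnorm : ∀ l, d ≤ l → f l = f d)
    (hinj : Set.InjOn σ (Set.Iio d)) (hmaps : ∀ p < d, σ p < d)
    (hchain : ChainOK d f σ)
    (hcoord : 1 ≤ f 0 (σ (d - 1) + 1)) : IsCell d k (preP d f σ) := by
  refine ⟨?_, ?_, fun p => σ (if p = 0 then d - 1 else p - 1), ?_, ?_, ?_⟩
  · intro l
    unfold preP
    split_ifs with h
    · exact (hvtx 0).sub_step (hmaps (d-1) (by omega)) hcoord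
    · exact hvtx _
  · intro l hl
    unfold preP
    rw [if_neg (by omega), if_neg (by omega), min_eq_right (by omega), min_eq_right (by omega)]
  · intro a ha b hb heq
    simp only [Set.mem_Iio] at ha hb
    have hta : (if a = 0 then d - 1 else a - 1) < d := by split_ifs <;> omega
    have htb : (if b = 0 then d - 1 else b - 1) < d := by split_ifs <;> omega
    have := hinj (Set.mem_Iio.mpr hta) (Set.mem_Iio.mpr htb) heq
    split_ifs at this <;> omega
  · intro p hp
    dsimp only
    split_ifs <;> [exact hmaps (d-1) (by omega); exact hmaps (p-1) (by omega)]
  · intro p hp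
    dsimp only
    unfold preP
    rcases eq_or_ne p 0 with rfl | hp1
    · rw [if_neg (by omega), if_pos rfl, if_pos rfl]
      rw [show (0+1-1 : ℕ) = 0 by omega, min_eq_left (by omega)]
      exact (sub_add_cancel _ _).symm
    · rw [if_neg (by omega), if_neg hp1, if_neg hp1,
        show p + 1 - 1 = p from by omega, min_eq_left (by omega), min_eq_left (by omega)]
      have := hchain (p-1) (by omega)
      rw [show p - 1 + 1 = p by omega] at this
      exact this

/-! ### Members of a fiber -/

lemma member_agree_off {d k : ℕ} {f1 f2 : ℕ → V} {j : ℕ} (hd : 1 ≤ d)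
    (hj : j ≤ d) (hF : fct d f1 j = fct d f2 j) :
    ∀ l, l ≠ j → l ≤ d → f1 l = f2 l := by
  intro l hlj hld
  rcases lt_or_gt_of_ne hlj with h | h
  · have e1 := fct_lt (d := d) f1 j l (by omega) h
    have e2 := fct_lt (d := d) f2 j l (by omega) h
    rw [← e1, hF, e2]
  · have e1 := fct_ge (d := d) f1 j (l-1) (by omega) (by omega)
    have e2 := fct_ge (d := d) f2 j (l-1) (by omega) (by omega)
    rw [show l - 1 + 1 = l by omega] at e1 e2
    rw [← e1, hF, e2]

lemma member_eq_of_pos_zero {d k : ℕ} {f1 f2 : ℕ → V} (hd : 1 ≤ d)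
    (h1 : IsCell d k f1) (h2 : IsCell d k f2)
    (hF : fct d f1 0 = fct d f2 0) : f1 = f2 := by
  obtain ⟨hv1, hn1, σ1, hi1, hm1, hc1⟩ := h1
  obtain ⟨hv2, hn2, σ2, hi2, hm2, hc2⟩ := h2
  have hval : ∀ l, 1 ≤ l → l ≤ d → f1 l = f2 l := fun l h1l h2l =>
    member_agree_off (k := k) hd (by omega) hF l (by omega) h2l
  have hσ : ∀ p, p < d → p ≠ 0 → σ1 p = σ2 p := by
    intro p hpd hp1
    apply stepv_inj
    apply add_left_cancel (a := f1 p)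
    rw [← hc1 p hpd, hval (p+1) (by omega) (by omega), hc2 p hpd,
      hval p (by omega) (by omega)]
  have hσ0 : σ1 0 = σ2 0 :=
    sigma_determined hi1 hm1 hi2 hm2 0 (by omega) (fun p hp hne => hσ p hp hne)
  funext l
  rcases Nat.eq_zero_or_pos l with rfl | hl
  · have u1 := hc1 0 (by omega)
    have u2 := hc2 0 (by omega)
    have : f1 0 + stepv (σ1 0) = f2 0 + stepv (σ1 0) := by
      rw [← u1, hval 1 (by omega) (by omega), u2, hσ0]
    exact add_right_cancel this
  · rcases le_or_gt l d with hld | hld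
    · rw [hval l hl hld]
    · rw [hn1 l (by omega), hn2 l (by omega), hval d (by omega) (by omega)]

lemma member_eq_of_pos_d {d k : ℕ} {f1 f2 : ℕ → V} (hd : 1 ≤ d)
    (h1 : IsCell d k f1) (h2 : IsCell d k f2)
    (hF : fct d f1 d = fct d f2 d) : f1 = f2 := by
  obtain ⟨hv1, hn1, σ1, hi1, hm1, hc1⟩ := h1
  obtain ⟨hv2, hn2, σ2, hi2, hm2, hc2⟩ := h2
  have hval : ∀ l, l < d → f1 l = f2 l := fun l hl =>
    member_agree_off (k := k) hd (le_refl d) hF l (by omega) (by omega)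
  have hσ : ∀ p, p < d → p ≠ d - 1 → σ1 p = σ2 p := by
    intro p hpd hp1
    apply stepv_inj
    apply add_left_cancel (a := f1 p)
    rw [← hc1 p hpd, hval (p+1) (by omega), hc2 p hpd, hval p (by omega)]
  have hσl : σ1 (d-1) = σ2 (d-1) :=
    sigma_determined hi1 hm1 hi2 hm2 (d-1) (by omega) (fun p hp hne => hσ p hp hne)
  have hfd : f1 d = f2 d := by
    have u1 := hc1 (d-1) (by omega)
    have u2 := hc2 (d-1) (by omega)
    rw [show d - 1 + 1 = d by omega] at u1 u2
    rw [u1, u2, hval (d-1) (by omega), hσl]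
  funext l
  rcases le_or_gt l d with hld | hld
  · rcases eq_or_ne l d with rfl | hne
    · exact hfd
    · exact hval l (by omega)
  · rw [hn1 l (by omega), hn2 l (by omega), hfd]

/-- A middle member forces the position of every member. -/
lemma member_mid_pos {d k : ℕ} {f1 f2 : ℕ → V} {j1 j2 : ℕ} (hd : 1 ≤ d)
    (h1 : IsCell d k f1) (h2 : IsCell d k f2) (h0 : 0 < j1) (hj1d : j1 < d)
    (hj2 : j2 ≤ d) (hF : fct d f1 j1 = fct d f2 j2) : j2 = j1 := by
  obtain ⟨hv1, hn1, σ1, hi1, hm1, hc1⟩ := h1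
  obtain ⟨hv2, hn2, σ2, hi2, hm2, hc2⟩ := h2
  by_contra hne
  set l := j1 - 1 with hldef
  have e1 : fct d f1 j1 l = f1 l := fct_lt _ _ _ (by omega) (by omega)
  have e2 : fct d f1 j1 (l+1) = f1 (l+2) := by
    rw [fct_ge _ _ _ (by omega) (by omega)]
  have ed : fct d f1 j1 (l+1) = fct d f1 j1 l + (stepv (σ1 l) + stepv (σ1 (l+1))) := by
    rw [e1, e2, hc1 (l+1) (by omega), hc1 l (by omega)]
    abel
  have es : ∃ e, fct d f2 j2 (l+1) = fct d f2 j2 l + stepv e := by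
    rcases lt_or_ge (l+1) j2 with h | h
    · exact ⟨σ2 l, by
        rw [fct_lt f2 j2 l (by omega) (by omega), fct_lt f2 j2 (l+1) (by omega) h,
          hc2 l (by omega)]⟩
    · exact ⟨σ2 (l+1), by
        rw [fct_ge f2 j2 l (by omega) (by omega), fct_ge f2 j2 (l+1) (by omega) (by omega),
          hc2 (l+1) (by omega)]⟩
  obtain ⟨e, he⟩ := es
  rw [hF] at ed
  rw [he] at ed
  exact stepv_double_ne_single (σ1 l) (σ1 (l+1)) e (add_left_cancel ed).symm

/-- Classification of the members at a fixed middle position. -/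
lemma member_mid_classify {d k : ℕ} {f1 f2 : ℕ → V} {j : ℕ} {σ1 : ℕ → ℕ} (hd : 1 ≤ d)
    (hvtx1 : ∀ l, IsVtx d k (f1 l)) (hnorm1 : ∀ l, d ≤ l → f1 l = f1 d)
    (hinj1 : Set.InjOn σ1 (Set.Iio d)) (hmaps1 : ∀ p < d, σ1 p < d)
    (hchain1 : ChainOK d f1 σ1)
    (h2 : IsCell d k f2) (h0 : 0 < j) (hjd : j < d)
    (hF : fct d f1 j = fct d f2 j) : f2 = f1 ∨ f2 = midP f1 σ1 j := by
  obtain ⟨hv2, hn2, σ2, hi2, hm2, hc2⟩ := h2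
  have hagree : ∀ l, l ≠ j → l ≤ d → f1 l = f2 l :=
    member_agree_off (k := k) hd (by omega) hF
  have hsum : stepv (σ1 (j-1)) + stepv (σ1 j) = stepv (σ2 (j-1)) + stepv (σ2 j) := by
    have u1a := hchain1 (j-1) (by omega)
    have u1b := hchain1 j hjd
    have u2a := hc2 (j-1) (by omega)
    have u2b := hc2 j hjd
    rw [show j - 1 + 1 = j by omega] at u1a u2a
    have e1 : f1 (j+1) = f1 (j-1) + (stepv (σ1 (j-1)) + stepv (σ1 j)) := by
      rw [u1b, u1a]; abel
    have e2 : f2 (j+1) = f2 (j-1) + (stepv (σ2 (j-1)) + stepv (σ2 j)) := by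
      rw [u2b, u2a]; abel
    have e3 : f1 (j+1) = f2 (j+1) := hagree (j+1) (by omega) (by omega)
    have e4 : f1 (j-1) = f2 (j-1) := hagree (j-1) (by omega) (by omega)
    rw [e1, e4] at e3
    rw [e2] at e3
    exact add_left_cancel e3
  have hx := stepv_pair_eq hsum
  have hval2 : f2 j = f2 (j-1) + stepv (σ2 (j-1)) := by
    have := hc2 (j-1) (by omega)
    rwa [show j - 1 + 1 = j by omega] at this
  have e4 : f1 (j-1) = f2 (j-1) := hagree (j-1) (by omega) (by omega)
  rcases hx with h' | h'
  · left
    funext l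
    rcases eq_or_ne l j with rfl | hne
    · have hval1 : f1 l = f1 (l-1) + stepv (σ1 (l-1)) := by
        have := hchain1 (l-1) (by omega)
        rwa [show l - 1 + 1 = l by omega] at this
      rw [hval2, h', ← e4, ← hval1]
    · rcases le_or_gt l d with hld | hld
      · exact (hagree l hne hld).symm
      · rw [hn2 l (by omega), hnorm1 l (by omega),
          hagree d (by omega) (by omega)]
  · right
    funext l
    unfold midP
    rcases eq_or_ne l j with rfl | hne
    · rw [if_pos rfl, hval2, h', ← e4]
    · rw [if_neg hne]
      rcases le_or_gt l d with hld | hld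
      · exact (hagree l hne hld).symm
      · rw [hn2 l (by omega), hnorm1 l (by omega),
          hagree d (by omega) (by omega)]

/-- If the facet lies in the hyperplane `y_d = 0`, any member has position `d`. -/
lemma member_hyp_d {d k : ℕ} {f : ℕ → V} {j : ℕ} (hd : 1 ≤ d)
    (h : IsCell d k f) (hj : j ≤ d)
    (hyp : ∀ l < d, fct d f j l d = 0) : j = d := by
  obtain ⟨hv, hn, σ, hi, hm, hc⟩ := h
  by_contra hne
  have hjd : j < d := by omega
  have hfl : ∀ l ≤ d, l ≠ j → f l d = 0 := by
    intro l hld hlj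
    rcases lt_or_gt_of_ne hlj with h | h
    · have := hyp l (by omega)
      rwa [fct_lt f j l (by omega) h] at this
    · have := hyp (l-1) (by omega)
      rwa [fct_ge f j (l-1) (by omega) (by omega), show l - 1 + 1 = l by omega] at this
  obtain ⟨p, hp, hpv⟩ := sigma_surj hi hm (d-1) (by omega)
  have hsv : stepv (σ p) d = 1 := by
    have := stepv_succ_self (d-1)
    rw [show d - 1 + 1 = d by omega] at this
    rw [hpv, this]
  have hstep : f (p+1) d = f p d + 1 := by
    rw [hc p hp]
    simp only [Pi.add_apply, hsv]
  rcases eq_or_ne (p+1) j with he | hne1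
  · have hfj : f j d = 1 := by
      rw [← he, hstep, hfl p (by omega) (by omega)]
      norm_num
    have h2 : f (j+1) d = 0 := hfl (j+1) (by omega) (by omega)
    have h4 : 0 ≤ stepv (σ j) d := by
      have hσ := hm j hjd
      simp only [stepv]
      split_ifs <;> omega
    have h5 : f (j+1) d = f j d + stepv (σ j) d := by
      rw [hc j hjd]; simp
    omega
  · rcases eq_or_ne p j with he2 | hne2
    · have h2 : f (p+1) d = 0 := hfl (p+1) (by omega) (by omega)
      have h3 : 0 ≤ f p d := (hv p).1 d
      omega
    · have h2 : f (p+1) d = 0 := hfl (p+1) (by omega) (by omega)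
      have h3 : f p d = 0 := hfl p (by omega) hne2
      omega

/-! ### Facets of partners -/

lemma fct_midP {d : ℕ} (f : ℕ → V) (σ : ℕ → ℕ) (j : ℕ) :
    fct d (midP f σ j) j = fct d f j :=
  fct_congr (fun l hl => by unfold midP; rw [if_neg hl])

lemma fct_appP {d : ℕ} (hd : 1 ≤ d) (f : ℕ → V) (σ : ℕ → ℕ) :
    fct d (appP d f σ) d = fct d f 0 := by
  funext l
  unfold fct appP
  rw [if_pos (by omega : min l (d-1) < d), if_pos (by omega : min l (d-1) < d),
    if_neg (by omega : ¬ min l (d-1) < 0)]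

lemma fct_preP {d : ℕ} (hd : 1 ≤ d) (f : ℕ → V) (σ : ℕ → ℕ) :
    fct d (preP d f σ) 0 = fct d f d := by
  funext l
  unfold fct preP
  rw [if_neg (by omega : ¬ min l (d-1) < 0), if_pos (by omega : min l (d-1) < d),
    if_neg (by omega : ¬ min l (d-1) + 1 = 0),
    show min l (d-1) + 1 - 1 = min l (d-1) by omega,
    min_eq_left (min_le_right l (d-1))]

lemma midP_ne {d : ℕ} {f : ℕ → V} {σ : ℕ → ℕ} {j : ℕ}
    (hinj : Set.InjOn σ (Set.Iio d)) (h0 : 0 < j) (hjd : j < d)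
    (hchain : ChainOK d f σ) : midP f σ j ≠ f := by
  intro h
  have h1 := congrFun h j
  unfold midP at h1
  rw [if_pos rfl] at h1
  have h2 := hchain (j-1) (by omega)
  rw [show j - 1 + 1 = j by omega] at h2
  rw [h2] at h1
  have := stepv_inj (add_left_cancel h1)
  have := hinj (Set.mem_Iio.mpr hjd) (Set.mem_Iio.mpr (by omega : j - 1 < d)) this
  omega

/-! ### Blocked partners give hyperplane facets -/

lemma blocked_mid {d k : ℕ} {f : ℕ → V} {σ : ℕ → ℕ} {j : ℕ}
    (hvtx : ∀ l, IsVtx d k (f l)) (hinj : Set.InjOn σ (Set.Iio d))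
    (hmaps : ∀ p < d, σ p < d) (hchain : ChainOK d f σ)
    (h0 : 0 < j) (hjd : j < d) (hblock : f (j - 1) (σ j) = 0) :
    ∀ l < d, fct d f j l (σ j) = 0 := by
  set m := σ j with hm
  -- On [0, j-1] the coordinate m vanishes.
  have hB0 : ∀ l1 l2 : ℕ, l2 ≤ j - 1 →
      ((Finset.Ico l1 l2).filter (fun p => σ p = m)).card = 0 := by
    intro l1 l2 hl2
    rw [Finset.card_eq_zero, Finset.filter_eq_empty_iff]
    intro p hp
    rw [Finset.mem_Ico] at hp
    intro hpm
    have := hinj (Set.mem_Iio.mpr (by omega : p < d)) (Set.mem_Iio.mpr hjd) hpm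
    omega
  have h1 : f (j-1) m = f 0 m
      + ((Finset.Ico 0 (j-1)).filter (fun p => σ p + 1 = m)).card
      - ((Finset.Ico 0 (j-1)).filter (fun p => σ p = m)).card :=
    chain_coord hchain m (by omega) (by omega)
  rw [hB0 0 (j-1) (le_refl _), hblock] at h1
  have hf00 : f 0 m = 0 ∧ ((Finset.Ico 0 (j-1)).filter (fun p => σ p + 1 = m)).card = 0 := by
    have := (hvtx 0).1 m
    constructor <;> omega
  have hlow : ∀ l ≤ j - 1, f l m = 0 := by
    intro l hl
    have h2 : f l m = f 0 m
        + ((Finset.Ico 0 l).filter (fun p => σ p + 1 = m)).card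
        - ((Finset.Ico 0 l).filter (fun p => σ p = m)).card :=
      chain_coord hchain m (by omega) (by omega)
    have hsub : ((Finset.Ico 0 l).filter (fun p => σ p + 1 = m)).card
        ≤ ((Finset.Ico 0 (j-1)).filter (fun p => σ p + 1 = m)).card := by
      apply Finset.card_le_card
      apply Finset.filter_subset_filter
      apply Finset.Ico_subset_Ico (le_refl 0) (by omega)
    rw [hB0 0 l hl] at h2
    omega
  -- step over the gap
  have hj1 : f (j+1) m = f (j-1) m + stepv (σ (j-1)) m + stepv m m := by
    have e1 := hchain j hjd
    have e2 := hchain (j-1) (by omega)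
    rw [show j - 1 + 1 = j by omega] at e2
    rw [e1, e2]
    simp [hm]
  rw [hblock, stepv_self] at hj1
  have hstep1 : stepv (σ (j-1)) m = 1 ∧ f (j+1) m = 0 := by
    have hnn := (hvtx (j+1)).1 m
    have hrange : stepv (σ (j-1)) m ≤ 1 := by
      simp only [stepv]; split_ifs <;> omega
    constructor <;> omega
  have hm1 : σ (j-1) + 1 = m := by
    have := hstep1.1
    simp only [stepv] at this
    split_ifs at this <;> omega
  -- On [j+1, d] the coordinate m vanishes.
  have hhigh : ∀ l, j + 1 ≤ l → l ≤ d → f l m = 0 := by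
    intro l hl1 hl2
    have h2 : f l m = f (j+1) m
        + ((Finset.Ico (j+1) l).filter (fun p => σ p + 1 = m)).card
        - ((Finset.Ico (j+1) l).filter (fun p => σ p = m)).card :=
      chain_coord hchain m hl1 hl2
    have hA : ((Finset.Ico (j+1) l).filter (fun p => σ p + 1 = m)).card = 0 := by
      rw [Finset.card_eq_zero, Finset.filter_eq_empty_iff]
      intro p hp hpm
      rw [Finset.mem_Ico] at hp
      have : σ p = σ (j-1) := by omega
      have := hinj (Set.mem_Iio.mpr (by omega : p < d))
        (Set.mem_Iio.mpr (by omega : j - 1 < d)) this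
      omega
    have hB : ((Finset.Ico (j+1) l).filter (fun p => σ p = m)).card = 0 := by
      rw [Finset.card_eq_zero, Finset.filter_eq_empty_iff]
      intro p hp hpm
      rw [Finset.mem_Ico] at hp
      have := hinj (Set.mem_Iio.mpr (by omega : p < d)) (Set.mem_Iio.mpr hjd) hpm
      omega
    rw [hA, hB, hstep1.2] at h2
    omega
  intro l hl
  rcases lt_or_ge l j with h | h
  · rw [fct_lt f j l (by omega) h]
    exact hlow l (by omega)
  · rw [fct_ge f j l (by omega) h]
    exact hhigh (l+1) (by omega) (by omega)

lemma blocked_app {d k : ℕ} {f : ℕ → V} {σ : ℕ → ℕ} (hd : 1 ≤ d)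
    (hvtx : ∀ l, IsVtx d k (f l)) (hinj : Set.InjOn σ (Set.Iio d))
    (hmaps : ∀ p < d, σ p < d) (hchain : ChainOK d f σ)
    (hblock : f d (σ 0) = 0) :
    ∀ l < d, fct d f 0 l (σ 0) = 0 := by
  set m := σ 0 with hm
  have hB0 : ∀ l2 : ℕ, l2 ≤ d →
      ((Finset.Ico 1 l2).filter (fun p => σ p = m)).card = 0 := by
    intro l2 hl2
    rw [Finset.card_eq_zero, Finset.filter_eq_empty_iff]
    intro p hp hpm
    rw [Finset.mem_Ico] at hp
    have := hinj (Set.mem_Iio.mpr (by omega : p < d)) (Set.mem_Iio.mpr (by omega : 0 < d)) hpm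
    omega
  have h1 : f d m = f 1 m
      + ((Finset.Ico 1 d).filter (fun p => σ p + 1 = m)).card
      - ((Finset.Ico 1 d).filter (fun p => σ p = m)).card :=
    chain_coord hchain m (by omega) (le_refl d)
  rw [hB0 d (le_refl d), hblock] at h1
  have hf1 : f 1 m = 0 ∧ ((Finset.Ico 1 d).filter (fun p => σ p + 1 = m)).card = 0 := by
    have := (hvtx 1).1 m
    constructor <;> omega
  intro l hl
  rw [fct_ge f 0 l (by omega) (by omega)]
  have h2 : f (l+1) m = f 1 m
      + ((Finset.Ico 1 (l+1)).filter (fun p => σ p + 1 = m)).card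
      - ((Finset.Ico 1 (l+1)).filter (fun p => σ p = m)).card :=
    chain_coord hchain m (by omega) (by omega)
  have hsub : ((Finset.Ico 1 (l+1)).filter (fun p => σ p + 1 = m)).card
      ≤ ((Finset.Ico 1 d).filter (fun p => σ p + 1 = m)).card := by
    apply Finset.card_le_card
    apply Finset.filter_subset_filter
    apply Finset.Ico_subset_Ico (le_refl 1) (by omega)
  rw [hB0 (l+1) (by omega)] at h2
  omega

lemma blocked_pre {d k : ℕ} {f : ℕ → V} {σ : ℕ → ℕ} (hd : 1 ≤ d)
    (hvtx : ∀ l, IsVtx d k (f l)) (hinj : Set.InjOn σ (Set.Iio d))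
    (hmaps : ∀ p < d, σ p < d) (hchain : ChainOK d f σ)
    (hblock : f 0 (σ (d - 1) + 1) = 0) :
    ∀ l < d, fct d f d l (σ (d - 1) + 1) = 0 := by
  set m := σ (d-1) + 1 with hm
  intro l hl
  rw [fct_lt f d l (by omega) (by omega)]
  have h2 : f l m = f 0 m
      + ((Finset.Ico 0 l).filter (fun p => σ p + 1 = m)).card
      - ((Finset.Ico 0 l).filter (fun p => σ p = m)).card :=
    chain_coord hchain m (by omega) (by omega)
  have hA : ((Finset.Ico 0 l).filter (fun p => σ p + 1 = m)).card = 0 := by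
    rw [Finset.card_eq_zero, Finset.filter_eq_empty_iff]
    intro p hp hpm
    rw [Finset.mem_Ico] at hp
    have : σ p = σ (d-1) := by omega
    have := hinj (Set.mem_Iio.mpr (by omega : p < d))
      (Set.mem_Iio.mpr (by omega : d - 1 < d)) this
    omega
  have hnn := (hvtx l).1 m
  rw [hA, hblock] at h2
  omega

/-! ### Doors and pairs -/

def IsDoor (c : V → ℕ) (d : ℕ) (F : ℕ → V) : Prop :=
  (range d).image (fun l => c (F l)) = range d

noncomputable def pairs (c : V → ℕ) (d k : ℕ) : Finset ((ℕ → V) × ℕ) :=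
  ((cells d k) ×ˢ range (d + 1)).filter (fun p => IsDoor c d (fct d p.1 p.2))

lemma mem_pairs {c : V → ℕ} {d k : ℕ} {q : (ℕ → V) × ℕ} :
    q ∈ pairs c d k ↔ IsCell d k q.1 ∧ q.2 ≤ d ∧ IsDoor c d (fct d q.1 q.2) := by
  unfold pairs
  rw [Finset.mem_filter, Finset.mem_product, Finset.mem_range, mem_cells]
  constructor
  · rintro ⟨⟨h1, h2⟩, h3⟩; exact ⟨h1, by omega, h3⟩
  · rintro ⟨h1, h2, h3⟩; exact ⟨⟨h1, by omega⟩, h3⟩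

lemma member_F_vtx {d k : ℕ} {f : ℕ → V} {j : ℕ} (hd : 1 ≤ d)
    (h : IsCell d k f) (hj : j ≤ d) : ∀ l < d, IsVtx d k (fct d f j l) := by
  intro l hl
  rcases lt_or_ge l j with h' | h'
  · rw [fct_lt f j l (by omega) h']; exact h.1 l
  · rw [fct_ge f j l (by omega) h']; exact h.1 (l+1)

lemma door_no_hyp {c : V → ℕ} {d k : ℕ} {F : ℕ → V}
    (hc : ∀ v, IsVtx d k v → c v ≤ d ∧ v (c v) ≠ 0)
    (hvtxF : ∀ l < d, IsVtx d k (F l)) (hdoor : IsDoor c d F)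
    {m : ℕ} (hm : m < d) (hyp : ∀ l < d, F l m = 0) : False := by
  have : m ∈ (range d).image (fun l => c (F l)) := by
    rw [hdoor]; simpa using hm
  obtain ⟨l, hl, hcl⟩ := Finset.mem_image.mp this
  rw [Finset.mem_range] at hl
  have h2 := (hc (F l) (hvtxF l hl)).2
  rw [hcl] at h2
  exact h2 (hyp l hl)

/-- The key classification: the fiber of a door facet has exactly one member if
the facet lies in the hyperplane `y_d = 0`, and exactly two members otherwise. -/
lemma fiber_card {d k : ℕ} {c : V → ℕ} (hd : 1 ≤ d)
    (hc : ∀ v, IsVtx d k v → c v ≤ d ∧ v (c v) ≠ 0)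
    {F : ℕ → V} (hF : F ∈ (pairs c d k).image (fun p => fct d p.1 p.2)) :
    ((pairs c d k).filter (fun p => fct d p.1 p.2 = F)).card
      = if ∀ l < d, F l d = 0 then 1 else 2 := by
  obtain ⟨p0, hp0, hFp0'⟩ := Finset.mem_image.mp hF
  obtain ⟨f0, j0⟩ := p0
  rw [mem_pairs] at hp0
  have hcell0 : IsCell d k f0 := hp0.1
  have hj0 : j0 ≤ d := hp0.2.1
  have hFp0 : fct d f0 j0 = F := hFp0'
  have hdoorF : IsDoor c d F := hFp0 ▸ hp0.2.2
  have hvtxF : ∀ l < d, IsVtx d k (F l) := hFp0 ▸ member_F_vtx hd hcell0 hj0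
  set S := (pairs c d k).filter (fun p => fct d p.1 p.2 = F) with hSdef
  have hmemS : ∀ (g : ℕ → V) (j' : ℕ),
      (g, j') ∈ S ↔ IsCell d k g ∧ j' ≤ d ∧ fct d g j' = F := by
    intro g j'
    rw [hSdef, Finset.mem_filter, mem_pairs]
    constructor
    · rintro ⟨⟨h1, h2, _⟩, h4⟩; exact ⟨h1, h2, h4⟩
    · rintro ⟨h1, h2, h3⟩; exact ⟨⟨h1, h2, by
        show IsDoor c d (fct d g j')
        rw [show fct d g j' = F from h3]; exact hdoorF⟩, h3⟩
  by_cases hhyp : ∀ l < d, F l d = 0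
  · rw [if_pos hhyp]
    have hj0d : j0 = d :=
      member_hyp_d hd hcell0 hj0 (fun l hl => by rw [hFp0]; exact hhyp l hl)
    rw [hj0d] at hFp0
    have hSeq : S = {(f0, d)} := by
      ext q
      obtain ⟨g, j'⟩ := q
      rw [hmemS g j', Finset.mem_singleton, Prod.mk.injEq]
      constructor
      · rintro ⟨hq1, hq2, hq3⟩
        have hqd : j' = d :=
          member_hyp_d hd hq1 hq2 (fun l hl => by rw [hq3]; exact hhyp l hl)
        rw [hqd] at hq3
        exact ⟨member_eq_of_pos_d hd hq1 hcell0 (hq3.trans hFp0.symm), hqd⟩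
      · rintro ⟨rfl, rfl⟩
        exact ⟨hcell0, le_refl _, hFp0⟩
    rw [hSeq, Finset.card_singleton]
  · rw [if_neg hhyp]
    obtain ⟨hv0, hn0, σ0, hi0, hm0, hc0⟩ := hcell0
    have hcell0' : IsCell d k f0 := ⟨hv0, hn0, σ0, hi0, hm0, hc0⟩
    by_cases hj00 : 0 < j0 ∧ j0 < d
    · -- middle case
      obtain ⟨h00, h0d⟩ := hj00
      have hval : 1 ≤ f0 (j0-1) (σ0 j0) := by
        by_contra hcon
        push_neg at hcon
        have hnn : (0:ℤ) ≤ f0 (j0-1) (σ0 j0) := (hv0 (j0-1)).1 (σ0 j0)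
        have hbl : f0 (j0-1) (σ0 j0) = 0 := by omega
        exact door_no_hyp hc hvtxF hdoorF (hm0 j0 h0d)
          (fun l hl => by rw [← hFp0]; exact blocked_mid hv0 hi0 hm0 hc0 h00 h0d hbl l hl)
      have hpart : IsCell d k (midP f0 σ0 j0) :=
        midP_isCell hv0 hn0 hi0 hm0 hc0 h00 h0d hval
      have hpartS : (midP f0 σ0 j0, j0) ∈ S :=
        (hmemS _ _).mpr ⟨hpart, by omega, by rw [fct_midP, hFp0]⟩
      have hne : midP f0 σ0 j0 ≠ f0 := midP_ne hi0 h00 h0d hc0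
      have hSeq : S = {(f0, j0), (midP f0 σ0 j0, j0)} := by
        ext q
        obtain ⟨g, j'⟩ := q
        rw [hmemS g j', Finset.mem_insert, Finset.mem_singleton]
        constructor
        · rintro ⟨hq1, hq2, hq3⟩
          have hqj : j' = j0 := member_mid_pos hd hcell0' hq1 h00 h0d hq2
            (by rw [hFp0, ← hq3])
          rcases member_mid_classify hd hv0 hn0 hi0 hm0 hc0 hq1 h00 h0d
            (by rw [hFp0, ← hq3, hqj]) with h' | h'
          · left; rw [Prod.mk.injEq]; exact ⟨h', hqj⟩
          · right; rw [Prod.mk.injEq]; exact ⟨h', hqj⟩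
        · rintro (hq | hq) <;> (rw [Prod.mk.injEq] at hq; obtain ⟨rfl, rfl⟩ := hq)
          · exact ⟨hcell0', hj0, hFp0⟩
          · exact (hmemS _ _).mp hpartS
      rw [hSeq]
      rw [Finset.card_pair (fun hcon => hne (by
        rw [Prod.mk.injEq] at hcon
        exact hcon.1.symm))]
    · -- end cases
      rcases (by omega : j0 = 0 ∨ j0 = d) with rfl | h0d
      · -- j0 = 0, partner appP at position d
        have hval : 1 ≤ f0 d (σ0 0) := by
          by_contra hcon
          push_neg at hcon
          have hnn : (0:ℤ) ≤ f0 d (σ0 0) := (hv0 d).1 (σ0 0)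
          have hbl : f0 d (σ0 0) = 0 := by omega
          exact door_no_hyp hc hvtxF hdoorF (hm0 0 (by omega))
            (fun l hl => by rw [← hFp0]; exact blocked_app hd hv0 hi0 hm0 hc0 hbl l hl)
        have hpart : IsCell d k (appP d f0 σ0) :=
          appP_isCell hd hv0 hn0 hi0 hm0 hc0 hval
        have hpartS : (appP d f0 σ0, d) ∈ S :=
          (hmemS _ _).mpr ⟨hpart, le_refl d, by rw [fct_appP hd, hFp0]⟩
        have hSeq : S = {(f0, 0), (appP d f0 σ0, d)} := by
          ext q
          obtain ⟨g, j'⟩ := q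
          rw [hmemS g j', Finset.mem_insert, Finset.mem_singleton]
          constructor
          · rintro ⟨hq1, hq2, hq3⟩
            have hqe : ¬ (0 < j' ∧ j' < d) := by
              rintro ⟨ha, hb⟩
              have := member_mid_pos hd hq1 hcell0' ha hb (by omega : (0:ℕ) ≤ d)
                (by rw [hq3, ← hFp0])
              omega
            rcases (by omega : j' = 0 ∨ j' = d) with h0' | hdd
            · subst h0'
              left
              rw [Prod.mk.injEq]
              exact ⟨member_eq_of_pos_zero hd hq1 hcell0' (by rw [hq3, ← hFp0]), rfl⟩
            · rw [hdd] at hq3 ⊢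
              right
              rw [Prod.mk.injEq]
              refine ⟨member_eq_of_pos_d hd hq1 hpart ?_, rfl⟩
              rw [hq3, ← hFp0, ← fct_appP hd f0 σ0]
          · rintro (hq | hq) <;> rw [Prod.mk.injEq] at hq
            · obtain ⟨rfl, rfl⟩ := hq
              exact ⟨hcell0', hj0, hFp0⟩
            · obtain ⟨rfl, hj'⟩ := hq
              rw [hj']
              exact (hmemS _ _).mp hpartS
        rw [hSeq]
        rw [Finset.card_pair (by
          intro hcon
          rw [Prod.mk.injEq] at hcon
          omega)]
      · -- j0 = d, partner preP at position 0
        rw [h0d] at hFp0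
        have hval : 1 ≤ f0 0 (σ0 (d-1) + 1) := by
          by_contra hcon
          push_neg at hcon
          have hnn : (0:ℤ) ≤ f0 0 (σ0 (d-1) + 1) := (hv0 0).1 _
          have hbl : f0 0 (σ0 (d-1) + 1) = 0 := by omega
          have hhyp2 : ∀ l < d, F l (σ0 (d-1) + 1) = 0 :=
            fun l hl => by rw [← hFp0]; exact blocked_pre hd hv0 hi0 hm0 hc0 hbl l hl
          rcases lt_or_ge (σ0 (d-1) + 1) d with hlt | hge
          · exact door_no_hyp hc hvtxF hdoorF hlt hhyp2
          · have heq : σ0 (d-1) + 1 = d := by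
              have := hm0 (d-1) (by omega); omega
            apply hhyp
            intro l hl
            rw [← heq]
            exact hhyp2 l (by omega)
        have hpart : IsCell d k (preP d f0 σ0) :=
          preP_isCell hd hv0 hn0 hi0 hm0 hc0 hval
        have hpartS : (preP d f0 σ0, 0) ∈ S :=
          (hmemS _ _).mpr ⟨hpart, by omega, by rw [fct_preP hd, hFp0]⟩
        have hSeq : S = {(preP d f0 σ0, 0), (f0, d)} := by
          ext q
          obtain ⟨g, j'⟩ := q
          rw [hmemS g j', Finset.mem_insert, Finset.mem_singleton]
          constructor
          · rintro ⟨hq1, hq2, hq3⟩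
            have hqe : ¬ (0 < j' ∧ j' < d) := by
              rintro ⟨ha, hb⟩
              have := member_mid_pos hd hq1 hcell0' ha hb (le_refl d)
                (by rw [hq3, ← hFp0])
              omega
            rcases (by omega : j' = 0 ∨ j' = d) with h0' | hdd
            · subst h0'
              left
              rw [Prod.mk.injEq]
              refine ⟨member_eq_of_pos_zero hd hq1 hpart ?_, rfl⟩
              rw [hq3, ← hFp0, ← fct_preP hd f0 σ0]
            · rw [hdd] at hq3 ⊢
              right
              rw [Prod.mk.injEq]
              exact ⟨member_eq_of_pos_d hd hq1 hcell0' (by rw [hq3, ← hFp0]), rfl⟩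
          · rintro (hq | hq) <;> rw [Prod.mk.injEq] at hq
            · obtain ⟨rfl, rfl⟩ := hq
              exact (hmemS _ _).mp hpartS
            · obtain ⟨rfl, hj'⟩ := hq
              rw [hj']
              exact ⟨hcell0', le_refl d, hFp0⟩
        rw [hSeq]
        rw [Finset.card_pair (by
          intro hcon
          rw [Prod.mk.injEq] at hcon
          omega)]

lemma mem_rainbowCells {c : V → ℕ} {d k : ℕ} {f : ℕ → V} :
    f ∈ rainbowCells c d k ↔ IsCell d k f ∧ IsRainbow c d f := by
  unfold rainbowCells
  rw [Finset.mem_filter, mem_cells]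

/-- The boundary doors are exactly the rainbow cells one dimension down. -/
lemma boundary_doors {d k : ℕ} {c : V → ℕ} (hd : 1 ≤ d) (hk : 0 < k) :
    ((pairs c d k).image (fun p => fct d p.1 p.2)).filter (fun F => ∀ l < d, F l d = 0)
      = rainbowCells c (d-1) k := by
  ext F
  rw [Finset.mem_filter, mem_rainbowCells]
  constructor
  · rintro ⟨hFim, hhyp⟩
    obtain ⟨p0, hp0, hFp0'⟩ := Finset.mem_image.mp hFim
    obtain ⟨f, j⟩ := p0
    rw [mem_pairs] at hp0
    have hcell : IsCell d k f := hp0.1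
    have hj : j ≤ d := hp0.2.1
    have hFp0 : fct d f j = F := hFp0'
    have hdoorF : IsDoor c d F := hFp0 ▸ hp0.2.2
    have hjd : j = d := member_hyp_d hd hcell hj (fun l hl => by rw [hFp0]; exact hhyp l hl)
    rw [hjd] at hFp0
    obtain ⟨hv, hn, σ, hi, hm, hch⟩ := hcell
    have hFval : ∀ l, F l = f (min l (d-1)) := by
      intro l
      rw [← hFp0]
      unfold fct
      rw [if_pos (by omega : min l (d-1) < d)]
    have hFlow : ∀ l, l ≤ d - 1 → F l = f l := by
      intro l hl
      rw [hFval, min_eq_left hl]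
    have hlast : ∀ l, f (min l (d-1)) d = 0 := by
      intro l
      have h := hhyp (min l (d-1)) (by omega)
      rwa [hFval (min l (d-1)), min_eq_left (min_le_right l (d-1))] at h
    refine ⟨⟨?_, ?_, σ, ?_, ?_, ?_⟩, ?_⟩
    · -- vertices
      intro l
      obtain ⟨g1, g2, g3⟩ := hv (min l (d-1))
      rw [hFval]
      refine ⟨g1, ?_, ?_⟩
      · intro i hi2
        rcases eq_or_ne i d with rfl | hne
        · exact hlast l
        · exact g2 i (by omega)
      · rw [show (d - 1) + 1 = d by omega]
        rw [show d + 1 = d + 1 from rfl, Finset.sum_range_succ, hlast l, add_zero] at g3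
        exact g3
    · -- normalization
      intro l hl
      rw [hFval l, hFval (d-1), min_eq_right (by omega), min_self]
    · exact hi.mono (fun x hx => by simp only [Set.mem_Iio] at hx ⊢; omega)
    · -- steps stay below d-1
      intro p hp
      have h1 : σ p < d := hm p (by omega)
      by_contra hcon
      have hσp : σ p = d - 1 := by omega
      have e := congrFun (hch p (by omega)) d
      simp only [Pi.add_apply] at e
      have hsv : stepv (σ p) d = 1 := by
        have := stepv_succ_self (d-1)
        rw [show d - 1 + 1 = d by omega] at this
        rw [hσp, this]
      have hp0 : f p d = 0 := by
        have := hlast p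
        rwa [min_eq_left (by omega)] at this
      have hp1 : f (p+1) d = 0 := by
        have := hlast (p+1)
        rwa [min_eq_left (by omega)] at this
      omega
    · -- chain
      intro p hp
      rw [hFlow (p+1) (by omega), hFlow p (by omega)]
      exact hch p (by omega)
    · -- rainbow
      show (range (d - 1 + 1)).image (fun l => c (F l)) = range (d - 1 + 1)
      rw [show d - 1 + 1 = d by omega]
      exact hdoorF
  · rintro ⟨hcellg, hrb⟩
    obtain ⟨hvg, hng, σg, hig, hmg, hcg⟩ := hcellg
    have hsupp : ∀ l i, d - 1 < i → F l i = 0 := fun l i h => (hvg l).2.1 i h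
    have hdoorF : IsDoor c d F := by
      have := hrb
      unfold IsRainbow at this
      rwa [show d - 1 + 1 = d by omega] at this
    have hcoordkey : (1:ℤ) ≤ F (d-1) (d-1) := by
      rcases eq_or_lt_of_le hd with h1 | h2
    -- d = 1 case
      · have hsum := (hvg 0).2.2
        rw [show d - 1 + 1 = d by omega, ← h1] at hsum
        rw [show d - 1 = 0 by omega]
        rw [Finset.sum_range_one] at hsum
        rw [hsum]
        exact_mod_cast hk
      · -- d ≥ 2
        obtain ⟨p, hpp, hpv⟩ := sigma_surj hig hmg (d-2) (by omega)
        have hcc := chain_coord hcg (d-1) (by omega : (0:ℕ) ≤ d - 1) (le_refl (d-1))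
        have hB : ((Finset.Ico 0 (d-1)).filter (fun p => σg p = d-1)).card = 0 := by
          rw [Finset.card_eq_zero, Finset.filter_eq_empty_iff]
          intro q hq hqv
          rw [Finset.mem_Ico] at hq
          have := hmg q (by omega)
          omega
        have hA : 1 ≤ ((Finset.Ico 0 (d-1)).filter (fun p => σg p + 1 = d-1)).card := by
          rw [Nat.one_le_iff_ne_zero, ← Nat.pos_iff_ne_zero, Finset.card_pos]
          exact ⟨p, Finset.mem_filter.mpr ⟨by rw [Finset.mem_Ico]; omega, by omega⟩⟩
        have hnn := (hvg 0).1 (d-1)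
        rw [hB] at hcc
        omega
    have hvlift : ∀ l, IsVtx d k (F l) := by
      intro l
      obtain ⟨g1, g2, g3⟩ := hvg l
      refine ⟨g1, fun i hi2 => g2 i (by omega), ?_⟩
      rw [Finset.sum_range_succ, g2 d (by omega), add_zero]
      rw [show d - 1 + 1 = d by omega] at g3
      exact g3
    have hwv : IsVtx d k (F (d-1) + stepv (d-1)) :=
      (hvlift (d-1)).add_step (by omega) hcoordkey
    have hfcell : IsCell d k (fun l => if l < d then F l else F (d-1) + stepv (d-1)) := by
      refine ⟨?_, ?_, fun p => if p = d-1 then d-1 else σg p, ?_, ?_, ?_⟩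
      · intro l
        dsimp only
        split_ifs with h
        · exact hvlift l
        · exact hwv
      · intro l hl
        dsimp only
        rw [if_neg (by omega), if_neg (by omega)]
      · intro a ha b hb heq
        simp only [Set.mem_Iio] at ha hb
        dsimp only at heq
        split_ifs at heq with u1 u2 u2
        · omega
        · have := hmg b (by omega); omega
        · have := hmg a (by omega); omega
        · exact hig (Set.mem_Iio.mpr (by omega)) (Set.mem_Iio.mpr (by omega)) heq
      · intro p hp
        dsimp only
        split_ifs with u1
        · omega
        · have := hmg p (by omega); omega
      · intro p hp
        dsimp only
        by_cases hp1 : p = d - 1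
        · rw [if_neg (by omega : ¬ p + 1 < d), if_pos (by omega : p < d), if_pos hp1, hp1]
        · rw [if_pos (by omega : p + 1 < d), if_pos (by omega : p < d), if_neg hp1]
          exact hcg p (by omega)
    have hfct : fct d (fun l => if l < d then F l else F (d-1) + stepv (d-1)) d = F := by
      funext l
      unfold fct
      rw [if_pos (by omega : min l (d-1) < d)]
      dsimp only
      rw [if_pos (by omega : min l (d-1) < d)]
      rcases le_or_gt l (d-1) with h | h
      · rw [min_eq_left h]
      · rw [min_eq_right (by omega)]
        exact (hng l (by omega)).symm
    refine ⟨Finset.mem_image.mpr ⟨(fun l => if l < d then F l else F (d-1) + stepv (d-1), d),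
      ?_, hfct⟩, ?_⟩
    · rw [mem_pairs]
      refine ⟨hfcell, le_refl d, ?_⟩
      show IsDoor c d _
      rw [hfct]
      exact hdoorF
    · intro l hl
      exact hsupp l d (by omega)

lemma door_translate {c : V → ℕ} {d : ℕ} (hd : 1 ≤ d) (f : ℕ → V) (j : ℕ) (hj : j ≤ d) :
    IsDoor c d (fct d f j) ↔
      ((range (d+1)).erase j).image (fun l => c (f l)) = range d := by
  unfold IsDoor
  have himg : (range d).image (fun l => c (fct d f j l))
      = ((range (d+1)).erase j).image (fun l => c (f l)) := by
    ext a
    simp only [Finset.mem_image, Finset.mem_erase, Finset.mem_range]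
    constructor
    · rintro ⟨l, hl, rfl⟩
      rcases lt_or_ge l j with h | h
      · exact ⟨l, ⟨by omega, by omega⟩, by rw [fct_lt f j l (by omega) h]⟩
      · exact ⟨l+1, ⟨by omega, by omega⟩, by rw [fct_ge f j l (by omega) h]⟩
    · rintro ⟨l, ⟨hlj, hl⟩, rfl⟩
      rcases lt_or_ge l j with h | h
      · exact ⟨l, by omega, by rw [fct_lt f j l (by omega) h]⟩
      · have hl1 : j ≤ l - 1 := by omega
        exact ⟨l-1, by omega, by
          rw [fct_ge f j (l-1) (by omega) hl1, show l - 1 + 1 = l by omega]⟩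
  rw [himg]

lemma zmod2_cast_one_iff (m : ℕ) : ((m : ZMod 2) = 1) ↔ Odd m := by
  constructor
  · intro h1
    rcases Nat.even_or_odd m with h | h
    · exfalso
      obtain ⟨t, rfl⟩ := h
      push_cast at h1
      rw [show (t : ZMod 2) + t = 2 * t by ring, show (2 : ZMod 2) = 0 by decide,
        zero_mul] at h1
      exact absurd h1.symm (by decide)
    · exact h
  · intro h
    obtain ⟨t, rfl⟩ := h
    push_cast
    rw [show (2 : ZMod 2) * t + 1 = 2 * t + 1 by ring, show (2 : ZMod 2) = 0 by decide]
    ring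

/-- **Sperner's lemma** for the standard triangulation. -/
theorem sperner (d : ℕ) : ∀ (k : ℕ), 0 < k → ∀ (c : V → ℕ),
    (∀ v, IsVtx d k v → c v ≤ d ∧ v (c v) ≠ 0) →
    Odd (rainbowCells c d k).card := by
  induction d with
  | zero =>
    intro k hk c hc
    rw [base_case c k (fun v hv => (hc v hv).1), Finset.card_singleton]
    exact odd_one
  | succ n IH =>
    intro k hk c hc
    set d := n + 1 with hdd
    have hd : 1 ≤ d := by omega
    rw [← zmod2_cast_one_iff]
    have hc' : ∀ v, IsVtx n k v → c v ≤ n ∧ v (c v) ≠ 0 := by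
      intro v hv
      obtain ⟨g1, g2, g3⟩ := hv
      have hvd : IsVtx d k v := by
        refine ⟨g1, fun i hi => g2 i (by omega), ?_⟩
        rw [Finset.sum_range_succ, g2 d (by omega), add_zero]
        exact g3
      obtain ⟨h1, h2⟩ := hc v hvd
      have hne : c v ≠ d := by
        intro hcon
        exact h2 (by rw [hcon]; exact g2 d (by omega))
      exact ⟨by omega, h2⟩
    have IHval : ((rainbowCells c n k).card : ZMod 2) = 1 :=
      (zmod2_cast_one_iff _).mpr (IH k hk c hc')
    calc ((rainbowCells c d k).card : ZMod 2)
        = ∑ f ∈ cells d k, (if IsRainbow c d f then (1 : ZMod 2) else 0) := by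
          rw [rainbowCells, Finset.card_filter]
          push_cast
          rfl
      _ = ∑ f ∈ cells d k, ∑ j ∈ range (d+1),
            (if IsDoor c d (fct d f j) then (1 : ZMod 2) else 0) := by
          apply Finset.sum_congr rfl
          intro f hf
          have hcol : ∀ j, j ∈ range (d+1) → (fun l => c (f l)) j ≤ d := by
            intro j _
            exact (hc (f j) ((mem_cells.mp hf).1 j)).1
          have hdc := doorcount d (fun l => c (f l)) hcol
          have hsplit : (((range (d+1)).filter
              (fun j => ((range (d+1)).erase j).image (fun l => c (f l)) = range d)).card
                : ZMod 2)
              = ∑ j ∈ range (d+1), (if IsDoor c d (fct d f j) then (1 : ZMod 2) else 0) := by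
            rw [Finset.card_filter]
            push_cast
            apply Finset.sum_congr rfl
            intro j hj
            rw [Finset.mem_range] at hj
            by_cases hD : IsDoor c d (fct d f j)
            · rw [if_pos hD, if_pos ((door_translate hd f j (by omega)).mp hD)]
            · rw [if_neg hD, if_neg (fun hcon =>
                hD ((door_translate hd f j (by omega)).mpr hcon))]
          rw [← hsplit, hdc]
          by_cases hR : IsRainbow c d f
          · rw [if_pos hR, if_pos (show (range (d+1)).image (fun l => c (f l))
              = range (d+1) from hR)]
          · rw [if_neg hR, if_neg (show ¬ (range (d+1)).image (fun l => c (f l))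
              = range (d+1) from hR)]
      _ = ∑ p ∈ (cells d k) ×ˢ range (d+1),
            (if IsDoor c d (fct d p.1 p.2) then (1 : ZMod 2) else 0) := by
          rw [Finset.sum_product]
      _ = ((pairs c d k).card : ZMod 2) := by
          rw [pairs, Finset.card_filter]
          push_cast
          rfl
      _ = ∑ F ∈ (pairs c d k).image (fun p => fct d p.1 p.2),
            (((pairs c d k).filter (fun p => fct d p.1 p.2 = F)).card : ZMod 2) := by
          rw [Finset.card_eq_sum_card_image (fun p => fct d p.1 p.2) (pairs c d k)]
          push_cast
          rfl
      _ = ∑ F ∈ (pairs c d k).image (fun p => fct d p.1 p.2),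
            (if ∀ l < d, F l d = 0 then (1 : ZMod 2) else 0) := by
          apply Finset.sum_congr rfl
          intro F hF
          rw [fiber_card hd hc hF]
          by_cases hhyp : ∀ l < d, F l d = 0
          · rw [if_pos hhyp, if_pos hhyp]
            rfl
          · rw [if_neg hhyp, if_neg hhyp]
            decide
      _ = ((((pairs c d k).image (fun p => fct d p.1 p.2)).filter
            (fun F => ∀ l < d, F l d = 0)).card : ZMod 2) := by
          rw [Finset.card_filter]
          push_cast
          rfl
      _ = ((rainbowCells c n k).card : ZMod 2) := by
          rw [boundary_doors hd hk, show d - 1 = n by omega]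
      _ = 1 := IHval

lemma cell_diameter {d k : ℕ} {f : ℕ → V} (h : IsCell d k f) (j m : ℕ) (hj : j ≤ d) :
    |f j m - f 0 m| ≤ 2 := by
  obtain ⟨hv, hn, σ, hinj, hm, hch⟩ := h
  have hcc := chain_coord hch m (Nat.zero_le j) hj
  have hA := filter_sigma_card_le_one' hinj (l1 := 0) (l2 := j) hj m
  have hB := filter_sigma_card_le_one hinj (l1 := 0) (l2 := j) hj m
  rw [abs_le]
  constructor <;> omega

theorem rainbow_exists (d k : ℕ) (hk : 0 < k) (c : V → ℕ)
    (hc : ∀ v, IsVtx d k v → c v ≤ d ∧ v (c v) ≠ 0) :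
    ∃ f, IsCell d k f ∧
      (range (d + 1)).image (fun j => c (f j)) = range (d + 1) := by
  obtain ⟨f, hf⟩ := Finset.card_pos.mp (sperner d k hk c hc).pos
  rw [mem_rainbowCells] at hf
  exact ⟨f, hf.1, hf.2⟩

end KKMProof

open KKMProof Finset in
/-- **The Knaster–Kuratowski–Mazurkiewicz theorem.**
If the standard `n`-simplex `Δⁿ ⊂ ℝ^{n+1}` is covered by closed sets
`X 0, …, X n` such that each `X i` is disjoint from the `i`-th facet
`{x ∈ Δⁿ | x i = 0}`, then all the sets have a common point. -/
theorem stmt0 (n : ℕ) (X : Fin (n + 1) → Set (Fin (n + 1) → ℝ))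
    (hclosed : ∀ i, IsClosed (X i))
    (hsub : ∀ i, X i ⊆ stdSimplex ℝ (Fin (n + 1)))
    (hcover : stdSimplex ℝ (Fin (n + 1)) ⊆ ⋃ i, X i)
    (hfacet : ∀ i, Disjoint (X i) {x ∈ stdSimplex ℝ (Fin (n + 1)) | x i = 0}) :
    (⋂ i, X i).Nonempty := by
  classical
  -- the rescaled point of a grid vertex
  set pt : ℕ → V → (Fin (n+1) → ℝ) := fun k v i => (v (i : ℕ) : ℝ) / k with hpt
  have hsimplex : ∀ (k : ℕ), 0 < k → ∀ v, IsVtx n k v →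
      pt k v ∈ stdSimplex ℝ (Fin (n+1)) := by
    intro k hk v hv
    obtain ⟨h1, h2, h3⟩ := hv
    constructor
    · intro i
      show (0:ℝ) ≤ (v (i : ℕ) : ℝ) / k
      apply div_nonneg (by exact_mod_cast h1 (i : ℕ)) (by positivity)
    · rw [hpt]
      have heq : ∑ i : Fin (n+1), ((v (i:ℕ) : ℝ) / k) = (∑ i ∈ range (n+1), (v i : ℝ)) / k := by
        rw [Finset.sum_div, ← Fin.sum_univ_eq_sum_range (fun i => (v i : ℝ) / k) (n+1)]
      rw [heq]
      rw [show (∑ i ∈ range (n+1), (v i : ℝ)) = ((∑ i ∈ range (n+1), v i : ℤ) : ℝ) by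
        push_cast; ring]
      rw [h3]
      field_simp
      norm_cast
  -- construct a Sperner coloring at scale k and extract data
  have main : ∀ l : ℕ, ∃ y : Fin (n+1) → (Fin (n+1) → ℝ),
      (∀ i, y i ∈ X i) ∧ (∀ i i', dist (y i) (y i') ≤ 4 / (l+1)) := by
    intro l
    set k := l + 1 with hkdef
    have hk : 0 < k := by omega
    set c : V → ℕ := fun v =>
      if h : ∃ i, pt k v ∈ X i then (Classical.choose h : Fin (n+1)).val else 0 with hcdef
    have hcprop : ∀ v, IsVtx n k v → ∃ i : Fin (n+1),
        c v = i.val ∧ pt k v ∈ X i ∧ v (c v) ≠ 0 := by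
      intro v hv
      have hmem : pt k v ∈ stdSimplex ℝ (Fin (n+1)) := hsimplex k hk v hv
      have hex : ∃ i, pt k v ∈ X i := by
        have := hcover hmem
        rwa [Set.mem_iUnion] at this
      refine ⟨Classical.choose hex, by rw [hcdef]; simp [dif_pos hex], Classical.choose_spec hex, ?_⟩
      -- nonvanishing coordinate
      set i := Classical.choose hex
      have hXi : pt k v ∈ X i := Classical.choose_spec hex
      have hdisj := Set.disjoint_left.mp (hfacet i) hXi
      have hne : pt k v i ≠ 0 := by
        intro hcon
        exact hdisj ⟨hmem, hcon⟩
      have hcv : c v = i.val := by rw [hcdef]; simp [dif_pos hex]; rfl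
      rw [hcv]
      intro hcon
      apply hne
      rw [hpt]
      simp only
      rw [hcon]
      simp
    have hsp : ∀ v, IsVtx n k v → c v ≤ n ∧ v (c v) ≠ 0 := by
      intro v hv
      obtain ⟨i, hi1, _, hi3⟩ := hcprop v hv
      exact ⟨by rw [hi1]; omega, hi3⟩
    obtain ⟨f, hcell, hrb⟩ := rainbow_exists n k hk c hsp
    have hex2 : ∀ i : Fin (n+1), ∃ j, j ≤ n ∧ c (f j) = i.val := by
      intro i
      have : (i : ℕ) ∈ (range (n+1)).image (fun j => c (f j)) := by
        rw [hrb, Finset.mem_range]; omega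
      obtain ⟨j, hj, hcj⟩ := Finset.mem_image.mp this
      rw [Finset.mem_range] at hj
      exact ⟨j, by omega, hcj⟩
    choose jf hjf1 hjf2 using hex2
    refine ⟨fun i => pt k (f (jf i)), ?_, ?_⟩
    · intro i
      obtain ⟨i', hi1, hi2, _⟩ := hcprop (f (jf i)) (hcell.1 (jf i))
      have : i' = i := by
        apply Fin.val_injective
        rw [← hi1, hjf2]
      rwa [this] at hi2
    · intro i i'
      rw [dist_pi_le_iff (by positivity)]
      intro m
      have hd1 := cell_diameter hcell (jf i) (m : ℕ) (hjf1 i)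
      have hd2 := cell_diameter hcell (jf i') (m : ℕ) (hjf1 i')
      have hint : |f (jf i) (m : ℕ) - f (jf i') (m : ℕ)| ≤ 4 := by
        rw [abs_le] at hd1 hd2 ⊢
        omega
      show dist ((f (jf i) (m : ℕ) : ℝ) / k) ((f (jf i') (m : ℕ) : ℝ) / k) ≤ 4 / (l+1)
      rw [Real.dist_eq, div_sub_div_same, abs_div,
        abs_of_nonneg (by positivity : (0:ℝ) ≤ (k:ℝ))]
      have hkpos : (0:ℝ) < (k:ℝ) := by exact_mod_cast hk
      rw [show ((l:ℝ)+1) = (k:ℝ) by rw [hkdef]; push_cast; ring]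
      gcongr
      exact_mod_cast hint
  choose y hy1 hy2 using main
  have hx : ∀ l, y l 0 ∈ stdSimplex ℝ (Fin (n+1)) := fun l => hsub 0 (hy1 l 0)
  obtain ⟨a, ha, φ, hφ, hconv⟩ :=
    (isCompact_stdSimplex ℝ (Fin (n+1))).tendsto_subseq hx
  refine ⟨a, Set.mem_iInter.mpr (fun i => ?_)⟩
  have htend : Filter.Tendsto (fun l => y (φ l) i) Filter.atTop (nhds a) := by
    rw [tendsto_iff_dist_tendsto_zero]
    apply squeeze_zero (fun l => dist_nonneg)
      (g := fun l => 4 / (φ l + 1) + dist (y (φ l) 0) a)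
    · intro l
      calc dist (y (φ l) i) a ≤ dist (y (φ l) i) (y (φ l) 0) + dist (y (φ l) 0) a :=
            dist_triangle _ _ _
        _ ≤ 4 / (φ l + 1) + dist (y (φ l) 0) a := by
            have := hy2 (φ l) i 0
            linarith
    · have h1 : Filter.Tendsto (fun l => 4 / ((φ l : ℝ) + 1)) Filter.atTop (nhds 0) := by
        have hb : Filter.Tendsto (fun l : ℕ => ((φ l : ℝ) + 1)) Filter.atTop Filter.atTop := by
          apply Filter.tendsto_atTop_add_const_right
          exact tendsto_natCast_atTop_atTop.comp hφ.tendsto_atTop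
        exact Filter.Tendsto.div_atTop tendsto_const_nhds hb
      have h2 : Filter.Tendsto (fun l => dist (y (φ l) 0) a) Filter.atTop (nhds 0) :=
        (tendsto_iff_dist_tendsto_zero).mp hconv
      have := h1.add h2
      simpa using this
  exact (hclosed i).mem_of_tendsto htend
    (Filter.Eventually.of_forall (fun l => hy1 (φ l) i))
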